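/- Let L be a finite lattice, let (a,b) be a decoration site of L, and let t and t′ be two distinct doubly irreducible elements with a < t < b and a < t′ < b. Then the map L → L that exchanges t and t′ and fixes every other element is a lattice automorphism of L. -/
import Mathlib


/-- An element of a finite lattice is *doubly irreducible* if it has exactly one
upper cover and exactly one lower cover. -/
def DoublyIrreducible {α : Type*} [Lattice α] (x : α) : Prop :=
  (∃! u, x ⋖ u) ∧ (∃! l, l ⋖ x)

/-- A *decoration site* of a lattice is a pair `(a, b)` such that the set of upper
covers of `a` equals the set of lower covers of `b`, and `a` has at least two
upper covers. -/
def DecorationSite {α : Type*} [Lattice α] (a b : α) : Prop :=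
  {x | a ⋖ x} = {x | x ⋖ b} ∧ 2 ≤ {x | a ⋖ x}.ncard

/-- The doubly irreducible elements strictly between `a` and `b`. -/
def siteTrinkets {α : Type*} [Lattice α] (a b : α) : Set α :=
  {x | DoublyIrreducible x ∧ a < x ∧ x < b}

/-- A *trinket-removal set* of a lattice: for every decoration site `(a, b)` it
contains exactly `min d (k - 2)` doubly irreducible elements strictly between
`a` and `b` (where `d` is the number of doubly irreducible elements strictly
between `a` and `b`, and `k` is the number of upper covers of `a`), and it
contains no other elements. -/
def TrinketRemovalSet {α : Type*} [Lattice α] (T : Set α) : Prop :=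
  (∀ a b : α, DecorationSite a b →
      (T ∩ siteTrinkets a b).ncard =
        min (siteTrinkets a b).ncard ({x | a ⋖ x}.ncard - 2)) ∧
  ∀ t ∈ T, ∃ a b : α, DecorationSite a b ∧ t ∈ siteTrinkets a b

/-- A finite lattice is a *rack* if `min d (k - 2) = 0` for every decoration site. -/
def IsRack (α : Type*) [Lattice α] : Prop :=
  ∀ a b : α, DecorationSite a b →
    min (siteTrinkets a b).ncard ({x | a ⋖ x}.ncard - 2) = 0

/-- A *knot* of a finite lattice is an element distinct from top and bottom that
is comparable with every element. -/
def IsKnot {α : Type*} [Lattice α] (x : α) : Prop :=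
  (∃ y, x < y) ∧ (∃ y, y < x) ∧ ∀ y, x ≤ y ∨ y ≤ x

/-- Birkhoff's semimodularity condition: whenever distinct `x` and `y` both
cover a common element `a`, the join `x ⊔ y` covers both `x` and `y`. -/
def Semimodular (α : Type*) [Lattice α] : Prop :=
  ∀ a x y : α, x ≠ y → a ⋖ x → a ⋖ y → x ⋖ x ⊔ y ∧ y ⋖ x ⊔ y

/-- The modular law: for all `x ≤ z`, `x ⊔ (y ⊓ z) = (x ⊔ y) ⊓ z`. -/
def ModularLaw (α : Type*) [Lattice α] : Prop :=
  ∀ x y z : α, x ≤ z → x ⊔ (y ⊓ z) = (x ⊔ y) ⊓ z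

/-- A trinket's unique lower cover is `a` and unique upper cover is `b`;
hence everything strictly below it is `≤ a` and everything strictly above is `≥ b`. -/
lemma trinket_bounds {α : Type*} [Lattice α] [Finite α]
    {a b t : α} (hab : DecorationSite a b)
    (ht : DoublyIrreducible t) (h1 : a < t) (h2 : t < b) :
    (∀ x, x < t → x ≤ a) ∧ (∀ y, t < y → b ≤ y) := by
  obtain ⟨⟨u, hu, huu⟩, ⟨l, hl, hll⟩⟩ := ht
  obtain ⟨c, hac, hct⟩ := exists_le_covBy_of_lt h1
  have hcl : c = l := hll c hct
  have hal : a = l := by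
    by_contra hne
    have halt : a < l := lt_of_le_of_ne (hcl ▸ hac) (hne)
    obtain ⟨d, had, hdl⟩ := exists_covBy_le_of_lt halt
    have hdb : d ⋖ b := by
      have : d ∈ {x | x ⋖ b} := hab.1 ▸ had
      exact this
    exact hdb.2 (lt_of_le_of_lt hdl hl.lt) h2
  have hat : a ⋖ t := hal ▸ hl
  have htb : t ⋖ b := by
    have : t ∈ {x | x ⋖ b} := hab.1 ▸ hat
    exact this
  have hub : u = b := (huu b htb).symm ▸ rfl
  constructor
  · intro x hx
    obtain ⟨c', hxc', hc't⟩ := exists_le_covBy_of_lt hx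
    have : c' = l := hll c' hc't
    rw [this, ← hal] at hxc'
    exact hxc'
  · intro y hy
    obtain ⟨c', htc', hc'y⟩ := exists_covBy_le_of_lt hy
    have : c' = u := huu c' htc'
    rw [this, ← huu b htb] at hc'y
    exact hc'y

/-- Exchanging two distinct doubly irreducible elements strictly between the
corners of a decoration site, while fixing every other element, is a lattice
automorphism (the swap is a bijection preserving joins and meets). -/
theorem stmt_7 {α : Type*} [Lattice α] [Finite α] [Nonempty α] [DecidableEq α]
    {a b t t' : α} (hab : DecorationSite a b)
    (ht : DoublyIrreducible t) (ht' : DoublyIrreducible t') (htt' : t ≠ t')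
    (h1 : a < t) (h2 : t < b) (h1' : a < t') (h2' : t' < b) :
    (∀ x y : α, Equiv.swap t t' (x ⊔ y) = Equiv.swap t t' x ⊔ Equiv.swap t t' y) ∧
    (∀ x y : α, Equiv.swap t t' (x ⊓ y) = Equiv.swap t t' x ⊓ Equiv.swap t t' y) := by
  obtain ⟨hbelow, habove⟩ := trinket_bounds hab ht h1 h2
  obtain ⟨hbelow', habove'⟩ := trinket_bounds hab ht' h1' h2'
  -- t and t' are incomparable
  have hnc : ¬ t ≤ t' := fun h =>
    absurd (habove t' (lt_of_le_of_ne h htt')) (not_le_of_gt h2')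
  have hnc' : ¬ t' ≤ t := fun h =>
    absurd (habove' t (lt_of_le_of_ne h htt'.symm)) (not_le_of_gt h2)
  set σ := Equiv.swap t t' with hσ
  have key : Monotone (σ : α → α) := by
    intro x y hxy
    rcases eq_or_ne x t with hx | hxt
    · subst x
      rcases eq_or_ne y t with hy | hyt
      · subst y; exact le_rfl
      · rcases eq_or_ne y t' with hy | hyt'
        · subst y; exact absurd hxy hnc
        · have hby : b ≤ y := habove y (lt_of_le_of_ne hxy (Ne.symm hyt))
          rw [hσ, Equiv.swap_apply_left, Equiv.swap_apply_of_ne_of_ne hyt hyt']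
          exact le_trans (le_of_lt h2') hby
    · rcases eq_or_ne x t' with hx | hxt'
      · subst x
        rcases eq_or_ne y t' with hy | hyt'
        · subst y; exact le_rfl
        · rcases eq_or_ne y t with hy | hyt
          · subst y; exact absurd hxy hnc'
          · have hby : b ≤ y := habove' y (lt_of_le_of_ne hxy (Ne.symm hyt'))
            rw [hσ, Equiv.swap_apply_right, Equiv.swap_apply_of_ne_of_ne hyt hyt']
            exact le_trans (le_of_lt h2) hby
      · rcases eq_or_ne y t with hy | hyt
        · subst y
          have hxa : x ≤ a := hbelow x (lt_of_le_of_ne hxy hxt)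
          rw [hσ, Equiv.swap_apply_left, Equiv.swap_apply_of_ne_of_ne hxt hxt']
          exact le_trans hxa (le_of_lt h1')
        · rcases eq_or_ne y t' with hy | hyt'
          · subst y
            have hxa : x ≤ a := hbelow' x (lt_of_le_of_ne hxy hxt')
            rw [hσ, Equiv.swap_apply_right, Equiv.swap_apply_of_ne_of_ne hxt hxt']
            exact le_trans hxa (le_of_lt h1)
          · rw [hσ, Equiv.swap_apply_of_ne_of_ne hxt hxt',
              Equiv.swap_apply_of_ne_of_ne hyt hyt']
            exact hxy
  have keysymm : Monotone ((σ.symm : α → α)) := by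
    rw [hσ, Equiv.symm_swap]
    exact key
  let e : α ≃o α := Equiv.toOrderIso σ key keysymm
  exact ⟨fun x y => e.map_sup x y, fun x y => e.map_inf x y⟩
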